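/- Let p be an odd prime. For every continuous function f : ℤ_p → ℚ_p, the limit I_{−1}(f) = lim_{N→∞} Σ_{x=0}^{p^N−1} (−1)^x f(x) exists in ℚ_p, and it satisfies I_{−1}(f₁) + I_{−1}(f) = 2·f(0), where f₁ : ℤ_p → ℚ_p is defined by f₁(x) = f(x+1). -/

import Mathlib

open Filter Finset Topology

private lemma sum_range_mul_eq {M : Type*} [AddCommMonoid M] (g : ℕ → M) (m : ℕ) :
    ∀ n : ℕ, ∑ x ∈ range (m * n), g x = ∑ b ∈ range n, ∑ a ∈ range m, g (m * b + a)
  | 0 => by simp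
  | n + 1 => by
    rw [mul_add, mul_one, Finset.sum_range_add, sum_range_mul_eq g m n, Finset.sum_range_succ]

/-- For an odd prime `p` and a continuous `f : ℤ_p → ℚ_p`, the fermionic `p`-adic integral
`I₋₁(f) = lim_N ∑_{x=0}^{p^N-1} (-1)^x f(x)` exists, and `I₋₁(f₁) + I₋₁(f) = 2 f(0)`
where `f₁(x) = f(x+1)`. -/
theorem fermionic_integral_exists_and_shift (p : ℕ) [Fact (Nat.Prime p)] (hp : Odd p)
    (f : ℤ_[p] → ℚ_[p]) (hf : Continuous f) :
    ∃ I I₁ : ℚ_[p],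
      Tendsto (fun N : ℕ => ∑ x ∈ range (p ^ N), (-1 : ℚ_[p]) ^ x * f (x : ℤ_[p]))
        atTop (nhds I) ∧
      Tendsto (fun N : ℕ => ∑ x ∈ range (p ^ N), (-1 : ℚ_[p]) ^ x * f ((x : ℤ_[p]) + 1))
        atTop (nhds I₁) ∧
      I₁ + I = 2 * f 0 := by
  have hp1 : 1 < p := (Fact.out : p.Prime).one_lt
  set S : ℕ → ℚ_[p] := fun N => ∑ x ∈ range (p ^ N), (-1 : ℚ_[p]) ^ x * f (x : ℤ_[p]) with hSdef
  have hodd : ∀ N : ℕ, Odd (p ^ N) := fun N => hp.pow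
  have hgeom : ∑ b ∈ range p, (-1 : ℚ_[p]) ^ b = 1 := by
    rw [neg_one_geom_sum, if_neg (Nat.not_even_iff_odd.mpr hp)]
  -- key difference identity
  have key : ∀ N : ℕ, S (N + 1) - S N =
      ∑ b ∈ range p, ∑ a ∈ range (p ^ N),
        (-1 : ℚ_[p]) ^ (b + a) * (f ((p : ℤ_[p]) ^ N * (b : ℤ_[p]) + (a : ℤ_[p])) - f (a : ℤ_[p])) := by
    intro N
    have h1 : S (N + 1) = ∑ b ∈ range p, ∑ a ∈ range (p ^ N),
        (-1 : ℚ_[p]) ^ (b + a) * f ((p : ℤ_[p]) ^ N * (b : ℤ_[p]) + (a : ℤ_[p])) := by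
      show ∑ x ∈ range (p ^ (N + 1)), (-1 : ℚ_[p]) ^ x * f (x : ℤ_[p]) = _
      rw [pow_succ, sum_range_mul_eq (fun x => (-1 : ℚ_[p]) ^ x * f (x : ℤ_[p])) (p ^ N) p]
      refine Finset.sum_congr rfl fun b _ => Finset.sum_congr rfl fun a _ => ?_
      have hsign : (-1 : ℚ_[p]) ^ (p ^ N * b + a) = (-1 : ℚ_[p]) ^ (b + a) := by
        rw [pow_add, pow_add, pow_mul, (hodd N).neg_one_pow]
      have hcast : ((p ^ N * b + a : ℕ) : ℤ_[p]) = (p : ℤ_[p]) ^ N * (b : ℤ_[p]) + (a : ℤ_[p]) := by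
        push_cast; ring
      rw [hsign, hcast]
    have h2 : S N = ∑ b ∈ range p, ∑ a ∈ range (p ^ N),
        (-1 : ℚ_[p]) ^ (b + a) * f (a : ℤ_[p]) := by
      have : ∑ b ∈ range p, ∑ a ∈ range (p ^ N), (-1 : ℚ_[p]) ^ (b + a) * f (a : ℤ_[p])
          = (∑ b ∈ range p, (-1 : ℚ_[p]) ^ b) * ∑ a ∈ range (p ^ N), (-1 : ℚ_[p]) ^ a * f (a : ℤ_[p]) := by
        rw [Finset.sum_mul]
        refine Finset.sum_congr rfl fun b _ => ?_
        rw [Finset.mul_sum]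
        refine Finset.sum_congr rfl fun a _ => ?_
        rw [pow_add]; ring
      rw [this, hgeom, one_mul]
    rw [h1, h2, ← Finset.sum_sub_distrib]
    refine Finset.sum_congr rfl fun b _ => ?_
    rw [← Finset.sum_sub_distrib]
    refine Finset.sum_congr rfl fun a _ => ?_
    ring
  -- the differences tend to zero
  have hd0 : Tendsto (fun N => S (N + 1) - S N) atTop (𝓝 0) := by
    rw [NormedAddCommGroup.tendsto_nhds_zero]
    intro ε hε
    obtain ⟨δ, hδ, hδf⟩ := Metric.uniformContinuous_iff.mp
      (CompactSpace.uniformContinuous_of_continuous hf) (ε / 2) (half_pos hε)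
    have hppos : (0 : ℝ) < (p : ℝ)⁻¹ := by
      have : (0 : ℝ) < (p : ℝ) := by exact_mod_cast hp1.trans_le' (by norm_num)
      positivity
    have hplt : (p : ℝ)⁻¹ < 1 := by
      rw [inv_lt_one_iff₀]; right; exact_mod_cast hp1
    have hptend : Tendsto (fun N : ℕ => ((p : ℝ)⁻¹) ^ N) atTop (𝓝 0) :=
      tendsto_pow_atTop_nhds_zero_of_lt_one hppos.le hplt
    filter_upwards [hptend.eventually (gt_mem_nhds hδ)] with N hN
    rw [key N]
    have hbound : ‖∑ b ∈ range p, ∑ a ∈ range (p ^ N),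
        (-1 : ℚ_[p]) ^ (b + a) * (f ((p : ℤ_[p]) ^ N * (b : ℤ_[p]) + (a : ℤ_[p])) - f (a : ℤ_[p]))‖
        ≤ ε / 2 := by
      apply IsUltrametricDist.norm_sum_le_of_forall_le_of_nonneg (by linarith)
      intro b _
      apply IsUltrametricDist.norm_sum_le_of_forall_le_of_nonneg (by linarith)
      intro a _
      rw [norm_mul]
      have h1 : ‖(-1 : ℚ_[p]) ^ (b + a)‖ = 1 := by
        rw [norm_pow, norm_neg, norm_one, one_pow]
      rw [h1, one_mul]
      have hdist : dist ((p : ℤ_[p]) ^ N * (b : ℤ_[p]) + (a : ℤ_[p])) (a : ℤ_[p]) < δ := by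
        rw [dist_eq_norm, add_sub_cancel_right, norm_mul, norm_pow,
          PadicInt.norm_p]
        calc (p : ℝ)⁻¹ ^ N * ‖(b : ℤ_[p])‖ ≤ (p : ℝ)⁻¹ ^ N * 1 := by
              exact mul_le_mul_of_nonneg_left (PadicInt.norm_le_one _) (by positivity)
          _ < δ := by rw [mul_one]; exact hN
      have := hδf hdist
      rw [dist_eq_norm] at this
      linarith
    linarith
  -- summability and convergence of S
  have hsum : Summable (fun N => S (N + 1) - S N) :=
    NonarchimedeanAddGroup.summable_of_tendsto_cofinite_zero (Nat.cofinite_eq_atTop ▸ hd0)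
  obtain ⟨t, ht⟩ := hsum
  have hStend : Tendsto S atTop (𝓝 (t + S 0)) := by
    have h1 := ht.tendsto_sum_nat
    have h2 : ∀ N, ∑ k ∈ range N, (S (k + 1) - S k) = S N - S 0 := fun N =>
      Finset.sum_range_sub S N
    simp only [h2] at h1
    have h3 := h1.add (tendsto_const_nhds (x := S 0))
    simpa using h3
  -- shift identity
  set S₁ : ℕ → ℚ_[p] := fun N => ∑ x ∈ range (p ^ N), (-1 : ℚ_[p]) ^ x * f ((x : ℤ_[p]) + 1)
    with hS₁def
  have hshift : ∀ N, S₁ N + S N = f 0 + f (((p ^ N : ℕ) : ℤ_[p])) := by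
    intro N
    have h := Finset.sum_range_sub (fun x => (-1 : ℚ_[p]) ^ (x + 1) * f (x : ℤ_[p])) (p ^ N)
    have hL : ∑ x ∈ range (p ^ N),
        ((-1 : ℚ_[p]) ^ (x + 1 + 1) * f ((x + 1 : ℕ) : ℤ_[p])
          - (-1 : ℚ_[p]) ^ (x + 1) * f (x : ℤ_[p])) = S₁ N + S N := by
      rw [hS₁def, hSdef, ← Finset.sum_add_distrib]
      refine Finset.sum_congr rfl fun x _ => ?_
      have hc : ((x + 1 : ℕ) : ℤ_[p]) = (x : ℤ_[p]) + 1 := by push_cast; ring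
      rw [hc, pow_succ, pow_succ]
      ring
    rw [hL] at h
    rw [h, (Nat.even_add_one.mpr (Nat.not_even_iff_odd.mpr (hodd N))).neg_one_pow]
    simp [add_comm]
  -- limit of f(p^N)
  have hpow0 : Tendsto (fun N : ℕ => ((p ^ N : ℕ) : ℤ_[p])) atTop (𝓝 0) := by
    have : Tendsto (fun N : ℕ => ((p : ℤ_[p])) ^ N) atTop (𝓝 0) := by
      apply tendsto_pow_atTop_nhds_zero_of_norm_lt_one
      rw [PadicInt.norm_p]
      rw [inv_lt_one_iff₀]; right; exact_mod_cast hp1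
    simpa using this
  have hfp : Tendsto (fun N : ℕ => f (((p ^ N : ℕ) : ℤ_[p]))) atTop (𝓝 (f 0)) :=
    (hf.tendsto 0).comp hpow0
  refine ⟨t + S 0, 2 * f 0 - (t + S 0), hStend, ?_, by ring⟩
  have hS₁tend : Tendsto S₁ atTop (𝓝 (f 0 + f 0 - (t + S 0))) := by
    have := (tendsto_const_nhds (x := f 0)).add hfp |>.sub hStend
    refine this.congr fun N => ?_
    linear_combination -hshift N
  have heq : f 0 + f 0 - (t + S 0) = 2 * f 0 - (t + S 0) := by ring
  rwa [heq] at hS₁tend
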